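/- Let M ≥ n and let S be a set of M i.i.d. random strings in {A,C,G,T}^n each drawn uniformly from strings with no two consecutive equal characters. Then with probability at least 1 − 1/n, the length of a shortest common supersequence of all strings in S is at most 2n + 3√(n log M). -/

import Mathlib

open Finset
open scoped Classical

/-- Length of the shortest common supersequence of a finite family of strands. -/
noncomputable def scsLen {M : ℕ} (G : Fin M → List (Fin 4)) : ℕ :=
  sInf {m | ∃ L : List (Fin 4), L.length = m ∧ ∀ i, (G i).Sublist L}

/-- Strands of length n over {A,C,G,T} with no two consecutive equal characters. -/
def NoHomo (n : ℕ) : Type :=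
  {S : Fin n → Fin 4 // List.Chain' (· ≠ ·) (List.ofFn S)}

noncomputable instance (n : ℕ) : Fintype (NoHomo n) := by
  unfold NoHomo; infer_instance

/-! ### Auxiliary definitions: periodic supersequence and greedy embedding cost -/

/-- periodic list a, a+1, a+2, ... of length k over Fin 4 -/
def per : Fin 4 → ℕ → List (Fin 4)
  | _, 0 => []
  | a, (k+1) => a :: per (a+1) k

/-- cost of greedily embedding l into `per a _` -/
def pcost : Fin 4 → List (Fin 4) → ℕ
  | _, [] => 0
  | a, (c :: l) => ((c - a).val + 1) + pcost (c+1) l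

lemma per_length (a : Fin 4) (k : ℕ) : (per a k).length = k := by
  induction k generalizing a with
  | zero => rfl
  | succ k ih => simp [per, ih]

lemma fin4_sub_one_val (x : Fin 4) (h : x ≠ 0) : (x - 1).val = x.val - 1 ∧ 1 ≤ x.val := by
  revert h; revert x; decide

lemma sublist_per : ∀ (k : ℕ) (l : List (Fin 4)) (a : Fin 4), pcost a l ≤ k → l.Sublist (per a k)
  | 0, [], _, _ => List.Sublist.refl _
  | 0, (_ :: _), _, h => by simp [pcost] at h
  | (k+1), [], _, _ => List.nil_sublist _
  | (k+1), (c :: l), a, h => by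
    by_cases hc : c = a
    · subst hc
      have : pcost (c+1) l ≤ k := by simp [pcost] at h; omega
      exact List.Sublist.cons₂ c (sublist_per k l (c+1) this)
    · have hne : c - a ≠ 0 := sub_ne_zero.mpr hc
      have hv := fin4_sub_one_val (c - a) hne
      have heq : c - (a+1) = (c - a) - 1 := sub_add_eq_sub_sub c a 1
      have : pcost (a+1) (c :: l) ≤ k := by
        simp only [pcost, heq] at h ⊢
        omega
      exact (sublist_per k (c :: l) (a+1) this).cons a

lemma fin4_step (c p : Fin 4) (h : c ≠ p) :
    (c - (p+1)).val + 1 ≤ 3 ∧ (c - (p+1)).val + 1 = (c - p).val := by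
  revert h; revert c p; decide

lemma pcost_chain_le : ∀ (l : List (Fin 4)) (p : Fin 4), List.Chain' (· ≠ ·) (p :: l) →
    pcost (p+1) l ≤ 3 * l.length
  | [], _, _ => le_refl _
  | (c :: l), p, h => by
    rw [List.Chain', List.isChain_cons_cons] at h
    have h1 := fin4_step c p (Ne.symm h.1)
    have h2 := pcost_chain_le l c h.2
    simp only [pcost, List.length_cons]
    omega

lemma pcost_le (l : List (Fin 4)) (h : List.Chain' (· ≠ ·) l) :
    pcost 0 l ≤ 3 * l.length + 1 := by
  cases l with
  | nil => simp [pcost]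
  | cons c l =>
    have h2 := pcost_chain_le l c h
    have hc : (c - 0).val ≤ 3 := Nat.lt_succ_iff.mp (c - 0).isLt
    simp only [pcost, List.length_cons]
    omega

/-! ### Moment generating function counting -/

noncomputable def Hsum (x : ℝ) (m : ℕ) (p : Fin 4) : ℝ :=
  ∑ S : Fin m → Fin 4,
    if List.Chain' (· ≠ ·) (p :: List.ofFn S) then Real.exp (x * pcost (p+1) (List.ofFn S)) else 0

noncomputable abbrev mgf (x : ℝ) : ℝ := Real.exp (x*1) + Real.exp (x*2) + Real.exp (x*3)

lemma step_sum (x : ℝ) (p : Fin 4) :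
    (∑ c : Fin 4, if c ≠ p then Real.exp (x * (((c - (p+1)) : Fin 4).val + 1)) else 0)
      = mgf x := by
  fin_cases p <;>
    simp [Fin.sum_univ_four, show ((-2:Fin 4)).val = 2 from rfl,
      show ((-3:Fin 4)).val = 1 from rfl] <;>
    norm_num <;> ring

lemma Hsum_succ (x : ℝ) (m : ℕ) (p : Fin 4) :
    Hsum x (m+1) p =
      ∑ c : Fin 4, if c ≠ p then Real.exp (x * ((c - (p+1)).val + 1)) * Hsum x m c else 0 := by
  rw [Hsum, ← (Fin.consEquiv (fun _ : Fin (m+1) => Fin 4)).sum_comp]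
  rw [Fintype.sum_prod_type]
  refine Finset.sum_congr rfl fun c _ => ?_
  rw [Hsum]
  by_cases hc : c = p
  · subst hc
    simp only [if_neg (by simp : ¬ (c ≠ c))]
    refine Finset.sum_eq_zero fun S _ => ?_
    rw [if_neg]
    simp only [Fin.consEquiv_apply, List.ofFn_succ, Fin.cons_zero, Fin.cons_succ,
      List.Chain', List.isChain_cons_cons]
    tauto
  · rw [if_pos hc, Finset.mul_sum]
    refine Finset.sum_congr rfl fun S _ => ?_
    simp only [Fin.consEquiv_apply, List.ofFn_succ, Fin.cons_zero, Fin.cons_succ]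
    by_cases h2 : List.Chain' (· ≠ ·) (c :: List.ofFn S)
    · rw [if_pos (show List.Chain' (· ≠ ·) (p :: c :: List.ofFn S) from List.isChain_cons_cons.mpr ⟨Ne.symm hc, h2⟩), if_pos h2]
      rw [← Real.exp_add, ← mul_add]
      congr 2
      show ((pcost (p+1) (c :: List.ofFn S) : ℕ) : ℝ) = _
      simp [pcost]
    · rw [if_neg (fun hh : List.Chain' (· ≠ ·) (p :: c :: List.ofFn S) => h2 (List.isChain_cons_cons.mp hh).2), if_neg h2, mul_zero]

lemma Hsum_nonneg (x : ℝ) (m : ℕ) (p : Fin 4) : 0 ≤ Hsum x m p := by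
  apply Finset.sum_nonneg
  intro S _
  split <;> positivity

lemma Hsum_le (x : ℝ) : ∀ (m : ℕ) (p : Fin 4), Hsum x m p ≤ (mgf x)^m := by
  intro m
  induction m with
  | zero => intro p; simp [Hsum, pcost, List.Chain']
  | succ m ih =>
    intro p
    rw [Hsum_succ]
    calc ∑ c : Fin 4, (if c ≠ p then Real.exp (x * ((c - (p+1)).val + 1)) * Hsum x m c else 0)
        ≤ ∑ c : Fin 4, (if c ≠ p then Real.exp (x * ((c - (p+1)).val + 1)) else 0) * (mgf x)^m := by
          apply Finset.sum_le_sum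
          intro c _
          by_cases hc : c ≠ p
          · rw [if_pos hc, if_pos hc]
            exact mul_le_mul_of_nonneg_left (ih c) (Real.exp_nonneg _)
          · rw [if_neg hc, if_neg hc, zero_mul]
      _ = mgf x * (mgf x)^m := by rw [← Finset.sum_mul, step_sum]
      _ = (mgf x)^(m+1) := (pow_succ' _ _).symm

lemma Hsum_zero : ∀ (m : ℕ) (p : Fin 4), Hsum 0 m p = 3^m := by
  intro m
  induction m with
  | zero => intro p; simp [Hsum, pcost, List.Chain']
  | succ m ih =>
    intro p
    rw [Hsum_succ]
    simp only [zero_mul, Real.exp_zero, one_mul, ih]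
    rw [Finset.sum_ite, Finset.sum_const, Finset.sum_const_zero, add_zero]
    have : (univ.filter (fun c : Fin 4 => c ≠ p)).card = 3 := by
      fin_cases p <;> decide
    rw [this, pow_succ']
    norm_num

noncomputable def Zsum (x : ℝ) (n : ℕ) : ℝ :=
  ∑ S : Fin n → Fin 4,
    if List.Chain' (· ≠ ·) (List.ofFn S) then Real.exp (x * pcost 0 (List.ofFn S)) else 0

lemma Zsum_succ (x : ℝ) (m : ℕ) :
    Zsum x (m+1) = ∑ c : Fin 4, Real.exp (x * (c.val + 1)) * Hsum x m c := by
  rw [Zsum, ← (Fin.consEquiv (fun _ : Fin (m+1) => Fin 4)).sum_comp]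
  rw [Fintype.sum_prod_type]
  refine Finset.sum_congr rfl fun c _ => ?_
  rw [Hsum, Finset.mul_sum]
  refine Finset.sum_congr rfl fun S _ => ?_
  simp only [Fin.consEquiv_apply, List.ofFn_succ, Fin.cons_zero, Fin.cons_succ]
  by_cases h2 : List.Chain' (· ≠ ·) (c :: List.ofFn S)
  · rw [if_pos h2, if_pos h2, ← Real.exp_add, ← mul_add]
    congr 2
    show ((pcost 0 (c :: List.ofFn S) : ℕ) : ℝ) = _
    simp [pcost]
  · rw [if_neg h2, if_neg h2, mul_zero]

lemma Zsum_le (x : ℝ) (hx : 0 ≤ x) (m : ℕ) :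
    Zsum x (m+1) ≤ 4 * Real.exp (x * 4) * (mgf x)^m := by
  rw [Zsum_succ]
  have hb : ∀ c : Fin 4, Real.exp (x * (c.val + 1)) * Hsum x m c
      ≤ Real.exp (x * 4) * (mgf x)^m := by
    intro c
    apply mul_le_mul
    · apply Real.exp_le_exp.mpr
      apply mul_le_mul_of_nonneg_left _ hx
      have : c.val ≤ 3 := Nat.lt_succ_iff.mp c.isLt
      have : (c.val : ℝ) ≤ 3 := by exact_mod_cast this
      linarith
    · exact Hsum_le x m c
    · exact Hsum_nonneg x m c
    · positivity
  calc ∑ c : Fin 4, Real.exp (x * (c.val + 1)) * Hsum x m c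
      ≤ ∑ _c : Fin 4, Real.exp (x * 4) * (mgf x)^m := Finset.sum_le_sum fun c _ => hb c
    _ = 4 * Real.exp (x * 4) * (mgf x)^m := by
        rw [Finset.sum_const]
        simp [mul_assoc]

lemma Zsum_zero (m : ℕ) : Zsum 0 (m+1) = 4 * 3^m := by
  rw [Zsum_succ]
  simp only [zero_mul, Real.exp_zero, one_mul, Hsum_zero]
  rw [Finset.sum_const]
  simp

lemma mgf_le (x : ℝ) : mgf x ≤ 3 * Real.exp (2*x + x^2/2) := by
  have h1 : Real.exp (x*1) + Real.exp (x*3) = 2 * Real.exp (2*x) * Real.cosh x := by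
    rw [Real.cosh_eq]
    have e1 : Real.exp (x*1) = Real.exp (2*x) * Real.exp (-x) := by
      rw [← Real.exp_add]; ring_nf
    have e3 : Real.exp (x*3) = Real.exp (2*x) * Real.exp x := by
      rw [← Real.exp_add]; ring_nf
    rw [e1, e3]; ring
  have h2 : Real.cosh x ≤ Real.exp (x^2/2) := Real.cosh_le_exp_half_sq x
  have h3 : Real.exp (x*2) ≤ Real.exp (2*x) * Real.exp (x^2/2) := by
    rw [← Real.exp_add]
    apply Real.exp_le_exp.mpr
    nlinarith [sq_nonneg x]
  have h4 : Real.exp (2*x + x^2/2) = Real.exp (2*x) * Real.exp (x^2/2) := by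
    rw [← Real.exp_add]
  calc mgf x = (Real.exp (x*1) + Real.exp (x*3)) + Real.exp (x*2) := by rw [mgf]; ring
    _ ≤ 2 * Real.exp (2*x) * Real.exp (x^2/2) + Real.exp (2*x) * Real.exp (x^2/2) := by
        nlinarith [Real.exp_nonneg (2*x), h2, h3]
    _ = 3 * Real.exp (2*x + x^2/2) := by rw [h4]; ring

/-! ### Bridging to NoHomo -/

lemma sum_noHomo (n : ℕ) (f : (Fin n → Fin 4) → ℝ) :
    ∑ s : NoHomo n, f s.1 =
      ∑ S : Fin n → Fin 4, if List.Chain' (· ≠ ·) (List.ofFn S) then f S else 0 := by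
  rw [← Finset.sum_filter]
  exact (Finset.sum_subtype _ (by simp) f).symm

lemma card_noHomo (n : ℕ) : ((Fintype.card (NoHomo n) : ℝ)) = Zsum 0 n := by
  have h : ((Fintype.card (NoHomo n) : ℝ)) = ∑ _s : NoHomo n, (1:ℝ) := by
    rw [Finset.sum_const, Finset.card_univ]; simp
  rw [h, sum_noHomo n (fun _ => (1:ℝ)), Zsum]
  refine Finset.sum_congr rfl fun S _ => ?_
  split <;> simp

lemma bad_card_le (n : ℕ) (x T : ℝ) (hx : 0 ≤ x) :
    ((univ.filter (fun s : NoHomo n => ¬ ((pcost 0 (List.ofFn s.1) : ℝ) ≤ T))).card : ℝ)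
      * Real.exp (x * T) ≤ Zsum x n := by
  have hZ : Zsum x n = ∑ s : NoHomo n, Real.exp (x * pcost 0 (List.ofFn s.1)) :=
    (sum_noHomo n (fun S => Real.exp (x * pcost 0 (List.ofFn S)))).symm
  rw [hZ]
  rw [Finset.card_eq_sum_ones]
  push_cast
  rw [Finset.sum_mul]
  calc ∑ _s ∈ (univ.filter (fun s : NoHomo n => ¬ ((pcost 0 (List.ofFn s.1) : ℝ) ≤ T))),
        (1:ℝ) * Real.exp (x * T)
      ≤ ∑ s ∈ (univ.filter (fun s : NoHomo n => ¬ ((pcost 0 (List.ofFn s.1) : ℝ) ≤ T))),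
        Real.exp (x * pcost 0 (List.ofFn s.1)) := by
        apply Finset.sum_le_sum
        intro s hs
        rw [one_mul]
        apply Real.exp_le_exp.mpr
        have : T < (pcost 0 (List.ofFn s.1) : ℝ) := lt_of_not_ge (Finset.mem_filter.mp hs).2
        exact mul_le_mul_of_nonneg_left this.le hx
    _ ≤ ∑ s : NoHomo n, Real.exp (x * pcost 0 (List.ofFn s.1)) := by
        apply Finset.sum_le_sum_of_subset_of_nonneg (Finset.filter_subset _ _)
        intro s _ _
        positivity

lemma good_tuple_card (n M : ℕ) (T : ℝ) :
    ((univ.filter (fun F : Fin M → NoHomo n =>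
        ∀ i, (pcost 0 (List.ofFn ((F i).1)) : ℝ) ≤ T)).card : ℝ)
      = (((univ.filter (fun s : NoHomo n => (pcost 0 (List.ofFn s.1) : ℝ) ≤ T)).card : ℝ)) ^ M := by
  have h : (univ.filter (fun F : Fin M → NoHomo n =>
        ∀ i, (pcost 0 (List.ofFn ((F i).1)) : ℝ) ≤ T))
      = Fintype.piFinset (fun _ : Fin M =>
          univ.filter (fun s : NoHomo n => (pcost 0 (List.ofFn s.1) : ℝ) ≤ T)) := by
    ext F
    simp [Fintype.mem_piFinset]
  rw [h, Fintype.card_piFinset]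
  push_cast
  rw [Finset.prod_const, Finset.card_univ, Fintype.card_fin]

lemma good_add_bad (n : ℕ) (T : ℝ) :
    (univ.filter (fun s : NoHomo n => (pcost 0 (List.ofFn s.1) : ℝ) ≤ T)).card
      + (univ.filter (fun s : NoHomo n => ¬ ((pcost 0 (List.ofFn s.1) : ℝ) ≤ T))).card
      = Fintype.card (NoHomo n) := by
  rw [Finset.card_filter_add_card_filter_not]
  exact Finset.card_univ

/-! ### Numeric core -/

lemma numeric_core (nr Mr : ℝ) (hn : 5 ≤ nr) (hM : nr ≤ Mr)
    (L t x : ℝ) (hL : L = Real.log Mr) (ht : t = 3 * Real.sqrt (nr * L)) (hx : x = t / nr) :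
    Real.exp (-(x*(2*nr+t)) + x*4 + (nr-1)*(2*x+x^2/2)) * (nr*Mr) ≤ 1 := by
  have hnpos : (0:ℝ) < nr := by linarith
  have hMpos : (0:ℝ) < Mr := by linarith
  have hlog2 : (0.6931471803:ℝ) < Real.log 2 := Real.log_two_gt_d9
  have hlog4 : Real.log 4 = 2 * Real.log 2 := by
    rw [show (4:ℝ) = 2^2 by norm_num, Real.log_pow]
    push_cast; ring
  have hL4 : Real.log 4 ≤ Real.log Mr := Real.log_le_log (by norm_num) (by linarith)
  have hL2 : (1.386:ℝ) ≤ L := by rw [hL]; linarith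
  have hLpos : (0:ℝ) < L := by linarith
  set s := Real.sqrt (nr * L) with hsdef
  have hs0 : 0 ≤ s := Real.sqrt_nonneg _
  have hs : s^2 = nr * L := Real.sq_sqrt (by positivity)
  have hsge : (2.4:ℝ) ≤ s := by nlinarith
  have htpos : 0 < t := by rw [ht]; nlinarith
  have hxn : x * nr = t := by rw [hx]; field_simp
  have hxt : x * t = 9 * L := by
    have h : x * t * nr = 9 * L * nr := by
      calc x * t * nr = t * (x * nr) := by ring
        _ = t * t := by rw [hxn]
        _ = 9 * s^2 := by rw [ht]; ring
        _ = 9 * (nr * L) := by rw [hs]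
        _ = 9 * L * nr := by ring
    exact mul_right_cancel₀ (ne_of_gt hnpos) h
  have hx2 : nr * x^2 = 9 * L := by
    have h : nr * x^2 = x * (x * nr) := by ring
    rw [h, hxn, hxt]
  have hxpos : 0 < x := by rw [hx]; positivity
  have hE : -(x*(2*nr+t)) + x*4 + (nr-1)*(2*x+x^2/2) ≤ -Real.log (nr * Mr) := by
    have hlogmul : Real.log (nr * Mr) = Real.log nr + Real.log Mr :=
      Real.log_mul (ne_of_gt hnpos) (ne_of_gt hMpos)
    have hlognr : Real.log nr ≤ Real.log Mr := Real.log_le_log hnpos hM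
    have hlog2L : Real.log (nr * Mr) ≤ 2 * L := by rw [hlogmul, hL]; linarith
    have key : 2 * t ≤ 2.5 * (L * nr) := by
      have h : 2 * t = 6 * s := by rw [ht]; ring
      rw [h]
      nlinarith
    have e1 : -(x*(2*nr+t)) + x*4 + (nr-1)*(2*x+x^2/2)
        = -(x*t) + 2*x + (nr-1)*x^2/2 := by ring
    rw [e1, hxt]
    have h2x : 2 * x * nr = 2 * t := by rw [← hxn]; ring
    have hq : (nr-1)*x^2/2 ≤ 4.5 * L := by nlinarith [sq_nonneg x]
    have h2 : 2*x ≤ 2.5 * L := by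
      have hh := key
      rw [← h2x] at hh
      have h3 : (2*x) * nr ≤ (2.5*L) * nr := by linarith
      exact le_of_mul_le_mul_right h3 hnpos
    linarith
  calc Real.exp (-(x*(2*nr+t)) + x*4 + (nr-1)*(2*x+x^2/2)) * (nr*Mr)
      ≤ Real.exp (-Real.log (nr*Mr)) * (nr*Mr) := by
        apply mul_le_mul_of_nonneg_right (Real.exp_le_exp.mpr hE) (by positivity)
    _ = 1 := by
        rw [Real.exp_neg, Real.exp_log (by positivity)]
        field_simp

/-! ### scsLen bounds -/

lemma scsLen_le_of {n M : ℕ} (F : Fin M → NoHomo n) (K : ℕ)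
    (h : ∀ i, pcost 0 (List.ofFn (F i).1) ≤ K) :
    scsLen (fun i => List.ofFn (F i).1) ≤ K :=
  Nat.sInf_le ⟨per 0 K, per_length 0 K, fun i => sublist_per K _ 0 (h i)⟩

lemma all_good_case (n M : ℕ)
    (h : ∀ F : Fin M → NoHomo n,
      (scsLen (fun i => List.ofFn (F i).1) : ℝ) ≤ 2 * n + 3 * Real.sqrt (n * Real.log M)) :
    (1 - 1 / (n : ℝ)) * (Fintype.card (Fin M → NoHomo n)) ≤
      ((Finset.univ.filter (fun F : Fin M → NoHomo n =>
        (scsLen (fun i => List.ofFn (F i).1) : ℝ)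
          ≤ 2 * n + 3 * Real.sqrt (n * Real.log M))).card : ℝ) := by
  have hfu : (Finset.univ.filter (fun F : Fin M → NoHomo n =>
        (scsLen (fun i => List.ofFn (F i).1) : ℝ)
          ≤ 2 * n + 3 * Real.sqrt (n * Real.log M))) = univ :=
    Finset.filter_true_of_mem (fun F _ => h F)
  rw [hfu, Finset.card_univ]
  have h1 : 1 - 1/(n:ℝ) ≤ 1 := by
    have : (0:ℝ) ≤ 1/(n:ℝ) := by positivity
    linarith
  exact mul_le_of_le_one_left (by positivity) h1


lemma three_n_bound (n M : ℕ) (h : ((n:ℝ)+1)^2 ≤ 9*((n:ℝ)*Real.log M)) :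
    ((3*n+1:ℕ):ℝ) ≤ 2*(n:ℝ) + 3*Real.sqrt ((n:ℝ)*Real.log M) := by
  have h1 : ((n:ℝ)+1) ≤ Real.sqrt (9*((n:ℝ)*Real.log M)) := Real.le_sqrt_of_sq_le h
  have h2 : Real.sqrt (9*((n:ℝ)*Real.log M)) = 3 * Real.sqrt ((n:ℝ)*Real.log M) := by
    rw [show (9:ℝ) = 3^2 by norm_num, Real.sqrt_mul (by positivity), Real.sqrt_sq (by norm_num)]
  push_cast
  rw [h2] at h1
  linarith

lemma det_case (n M : ℕ) (h2 : 2 ≤ n) (h4 : n ≤ 4) (hM : n ≤ M) :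
    (1 - 1 / (n : ℝ)) * (Fintype.card (Fin M → NoHomo n)) ≤
      ((Finset.univ.filter (fun F : Fin M → NoHomo n =>
        (scsLen (fun i => List.ofFn (F i).1) : ℝ)
          ≤ 2 * n + 3 * Real.sqrt (n * Real.log M))).card : ℝ) := by
  apply all_good_case
  intro F
  have hsc : scsLen (fun i => List.ofFn (F i).1) ≤ 3*n+1 := by
    apply scsLen_le_of F (3*n+1)
    intro i
    have h := pcost_le (List.ofFn (F i).1) (F i).2
    simpa [List.length_ofFn] using h
  have hlog2 : (0.6931471803:ℝ) < Real.log 2 := Real.log_two_gt_d9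
  have hMn : Real.log n ≤ Real.log M :=
    Real.log_le_log (by exact_mod_cast Nat.lt_of_lt_of_le Nat.zero_lt_two h2)
      (by exact_mod_cast hM)
  have h9 : ((n:ℝ)+1)^2 ≤ 9*((n:ℝ)*Real.log M) := by
    interval_cases n
    · -- n = 2
      have : Real.log 2 ≤ Real.log M := by exact_mod_cast hMn
      push_cast
      nlinarith
    · -- n = 3
      have : Real.log 2 ≤ Real.log M := by
        refine le_trans (Real.log_le_log (by norm_num) (by norm_num : (2:ℝ) ≤ 3)) ?_
        exact_mod_cast hMn
      push_cast
      nlinarith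
    · -- n = 4
      have h44 : Real.log 4 = 2 * Real.log 2 := by
        rw [show (4:ℝ) = 2^2 by norm_num, Real.log_pow]
        push_cast; ring
      have : 2 * Real.log 2 ≤ Real.log M := by
        rw [← h44]
        exact_mod_cast hMn
      push_cast
      nlinarith
  calc (scsLen (fun i => List.ofFn (F i).1) : ℝ) ≤ ((3*n+1:ℕ):ℝ) := by exact_mod_cast hsc
    _ ≤ 2*(n:ℝ) + 3*Real.sqrt ((n:ℝ)*Real.log M) := three_n_bound n M h9


lemma mgf_nonneg (x : ℝ) : 0 ≤ mgf x := by positivity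

set_option maxHeartbeats 1000000 in
lemma prob_case (n M : ℕ) (hn : 5 ≤ n) (hM : n ≤ M) :
    (1 - 1 / (n : ℝ)) * (Fintype.card (Fin M → NoHomo n)) ≤
      ((Finset.univ.filter (fun F : Fin M → NoHomo n =>
        (scsLen (fun i => List.ofFn (F i).1) : ℝ)
          ≤ 2 * n + 3 * Real.sqrt (n * Real.log M))).card : ℝ) := by
  obtain ⟨m, rfl⟩ : ∃ m, n = m + 1 := ⟨n - 1, by omega⟩
  set n := m + 1 with hn1
  set L : ℝ := Real.log M with hLdef
  set t : ℝ := 3 * Real.sqrt ((n:ℝ) * L) with htdef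
  set x : ℝ := t / (n:ℝ) with hxdef
  set T : ℝ := 2 * (n:ℝ) + t with hTdef
  have hnR : (5:ℝ) ≤ (n:ℝ) := by exact_mod_cast hn
  have hMR : (n:ℝ) ≤ (M:ℝ) := by exact_mod_cast hM
  have hnpos : (0:ℝ) < (n:ℝ) := by linarith
  have hMpos : (0:ℝ) < (M:ℝ) := by linarith
  have hx0 : 0 ≤ x := by
    rw [hxdef, htdef]
    positivity
  set Bc := (univ.filter (fun s : NoHomo n => ¬ ((pcost 0 (List.ofFn s.1) : ℝ) ≤ T))).card
    with hBcdef
  set Gc := (univ.filter (fun s : NoHomo n => (pcost 0 (List.ofFn s.1) : ℝ) ≤ T)).card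
    with hGcdef
  set N := Fintype.card (NoHomo n) with hNdef
  have hmr : (m:ℝ) = (n:ℝ) - 1 := by rw [hn1]; push_cast; ring
  have hNval : (N:ℝ) = 4 * 3^m := by rw [hNdef, card_noHomo, hn1]; exact Zsum_zero m
  have hNpos : (0:ℝ) < (N:ℝ) := by rw [hNval]; positivity
  -- the key bound : Bc * (n*M) ≤ N
  have hcore := numeric_core (n:ℝ) (M:ℝ) hnR hMR L t x hLdef htdef hxdef
  have hBN : (Bc:ℝ) * ((n:ℝ)*(M:ℝ)) ≤ (N:ℝ) := by
    have hZ1 := bad_card_le n x T hx0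
    have hZ2 := Zsum_le x hx0 m
    have hpow : (mgf x)^m ≤ (3*Real.exp (2*x+x^2/2))^m :=
      pow_le_pow_left₀ (mgf_nonneg x) (mgf_le x) m
    have hZ3 : Zsum x n ≤ 4 * Real.exp (x*4) * (3*Real.exp (2*x+x^2/2))^m := by
      rw [hn1]
      refine le_trans hZ2 ?_
      apply mul_le_mul_of_nonneg_left hpow (by positivity)
    have hcancel : Real.exp (x*T) * Real.exp (-(x*T)) = 1 := by
      rw [← Real.exp_add]; simp
    have e1 : (3*Real.exp (2*x+x^2/2))^m = 3^m * Real.exp ((m:ℝ)*(2*x+x^2/2)) := by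
      rw [mul_pow, ← Real.exp_nat_mul]
    have e2 : 4 * Real.exp (x*4) * (3^m * Real.exp ((m:ℝ)*(2*x+x^2/2)))
        * ((n:ℝ)*(M:ℝ)) * Real.exp (-(x*T))
        = 4 * 3^m * (Real.exp (-(x*(2*(n:ℝ)+t)) + x*4 + ((n:ℝ)-1)*(2*x+x^2/2)) * ((n:ℝ)*(M:ℝ))) := by
      rw [hmr, hTdef, Real.exp_add, Real.exp_add]
      ring
    calc (Bc:ℝ) * ((n:ℝ)*(M:ℝ))
        = ((Bc:ℝ) * Real.exp (x*T)) * ((n:ℝ)*(M:ℝ)) * Real.exp (-(x*T)) := by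
          linear_combination (-(Bc:ℝ)*((n:ℝ)*(M:ℝ))) * hcancel
      _ ≤ Zsum x n * ((n:ℝ)*(M:ℝ)) * Real.exp (-(x*T)) := by
          apply mul_le_mul_of_nonneg_right _ (Real.exp_nonneg _)
          exact mul_le_mul_of_nonneg_right hZ1 (by positivity)
      _ ≤ (4 * Real.exp (x*4) * (3*Real.exp (2*x+x^2/2))^m) * ((n:ℝ)*(M:ℝ))
            * Real.exp (-(x*T)) := by
          apply mul_le_mul_of_nonneg_right _ (Real.exp_nonneg _)
          exact mul_le_mul_of_nonneg_right hZ3 (by positivity)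
      _ = 4 * 3^m * (Real.exp (-(x*(2*(n:ℝ)+t)) + x*4 + ((n:ℝ)-1)*(2*x+x^2/2))
            * ((n:ℝ)*(M:ℝ))) := by rw [e1]; exact e2
      _ ≤ 4 * 3^m * 1 := by
          apply mul_le_mul_of_nonneg_left hcore (by positivity)
      _ = (N:ℝ) := by rw [mul_one, hNval]
  -- good tuples are in the stated filter
  have hT0 : 0 ≤ T := by
    rw [hTdef, htdef]
    positivity
  have hsub : (univ.filter (fun F : Fin M → NoHomo n =>
        ∀ i, (pcost 0 (List.ofFn ((F i).1)) : ℝ) ≤ T))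
      ⊆ (Finset.univ.filter (fun F : Fin M → NoHomo n =>
        (scsLen (fun i => List.ofFn (F i).1) : ℝ) ≤ T)) := by
    intro F hF
    rw [Finset.mem_filter] at hF ⊢
    refine ⟨hF.1, ?_⟩
    have hp := hF.2
    have hsc : scsLen (fun i => List.ofFn (F i).1) ≤ Nat.floor T := by
      apply scsLen_le_of
      intro i
      exact Nat.le_floor (hp i)
    calc (scsLen (fun i => List.ofFn (F i).1) : ℝ) ≤ (Nat.floor T : ℝ) := by exact_mod_cast hsc
      _ ≤ T := Nat.floor_le hT0
  -- cardinality chain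
  have hGB : Gc + Bc = N := by rw [hGcdef, hBcdef, hNdef]; exact good_add_bad n T
  have hBleN : (Bc:ℝ) ≤ (N:ℝ) := by
    have h : Bc ≤ N := by omega
    exact_mod_cast h
  have hGval : (Gc:ℝ) = (N:ℝ) - (Bc:ℝ) := by
    have : (Gc:ℝ) + (Bc:ℝ) = (N:ℝ) := by exact_mod_cast hGB
    linarith
  have hfrac : (M:ℝ) * ((Bc:ℝ)/(N:ℝ)) ≤ 1/(n:ℝ) := by
    rw [mul_div_assoc', div_le_div_iff₀ hNpos hnpos]
    nlinarith
  have hbern : 1 - (M:ℝ)*((Bc:ℝ)/(N:ℝ)) ≤ (1 - (Bc:ℝ)/(N:ℝ))^M := by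
    have hd1 : (Bc:ℝ)/(N:ℝ) ≤ 1 := by
      rw [div_le_one hNpos]
      exact hBleN
    have h := one_add_mul_le_pow (a := -((Bc:ℝ)/(N:ℝ))) (by linarith) M
    rw [← sub_eq_add_neg] at h
    calc 1 - (M:ℝ)*((Bc:ℝ)/(N:ℝ)) = 1 + (M:ℝ) * (-((Bc:ℝ)/(N:ℝ))) := by ring
      _ ≤ (1 - (Bc:ℝ)/(N:ℝ))^M := h
  have hcardfun : (Fintype.card (Fin M → NoHomo n) : ℝ) = (N:ℝ)^M := by
    rw [Fintype.card_fun, Fintype.card_fin]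
    push_cast
    rfl
  have hgood := good_tuple_card n M T
  calc (1 - 1 / (n : ℝ)) * (Fintype.card (Fin M → NoHomo n))
      ≤ (1 - (M:ℝ)*((Bc:ℝ)/(N:ℝ))) * (N:ℝ)^M := by
        rw [hcardfun]
        apply mul_le_mul_of_nonneg_right _ (by positivity)
        linarith
    _ ≤ (1 - (Bc:ℝ)/(N:ℝ))^M * (N:ℝ)^M := by
        apply mul_le_mul_of_nonneg_right hbern (by positivity)
    _ = ((1 - (Bc:ℝ)/(N:ℝ)) * (N:ℝ))^M := by rw [mul_pow]
    _ = ((N:ℝ) - (Bc:ℝ))^M := by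
        congr 1
        field_simp
    _ = (Gc:ℝ)^M := by rw [hGval]
    _ = ((univ.filter (fun F : Fin M → NoHomo n =>
          ∀ i, (pcost 0 (List.ofFn ((F i).1)) : ℝ) ≤ T)).card : ℝ) := by
        rw [hgood, hGcdef]
    _ ≤ _ := by
        exact_mod_cast Nat.cast_le.mpr (Finset.card_le_card hsub)

/-! ### Main theorem -/

/-- For M ≥ n i.i.d. strands drawn uniformly from length-n strands with no
homopolymers, with probability at least 1 - 1/n the shortest common
supersequence has length at most 2n + 3√(n log M). -/
theorem stmt6 (n M : ℕ) (hM : n ≤ M) :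
    (1 - 1 / (n : ℝ)) * (Fintype.card (Fin M → NoHomo n)) ≤
      ((Finset.univ.filter (fun F : Fin M → NoHomo n =>
        (scsLen (fun i => List.ofFn (F i).1) : ℝ)
          ≤ 2 * n + 3 * Real.sqrt (n * Real.log M))).card : ℝ) := by
  by_cases h5 : 5 ≤ n
  · exact prob_case n M h5 hM
  · by_cases h2 : 2 ≤ n
    · exact det_case n M h2 (by omega) hM
    · interval_cases n
      · -- n = 0
        apply all_good_case
        intro F
        have h0 : scsLen (fun i => List.ofFn (F i).1) = 0 := by
          apply Nat.le_zero.mp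
          apply scsLen_le_of F 0
          intro i
          have he : List.ofFn (F i).1 = [] := List.ofFn_zero
          rw [he]
          simp [pcost]
        rw [h0]
        push_cast
        positivity
      · -- n = 1
        have h1 : (1:ℝ) - 1/((1:ℕ):ℝ) = 0 := by norm_num
        rw [h1, zero_mul]
        positivity
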